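/- The real span of the five vector fields X₁ = (1/√(-p)) ∂ₓ, X₂ = ∂ₓ, X₃ = x ∂ₓ - p ∂ₚ, X₄ = x² ∂ₓ - 2xp ∂ₚ, X₅ = (x/√(-p)) ∂ₓ + 2√(-p) ∂ₚ on O = {p < 0} is a 5-dimensional Lie algebra of vector fields, i.e. the five vector fields are linearly independent over ℝ and their span is closed under the Lie bracket. -/

import Mathlib

open Real

/-- The half-plane `O = {(x,p) : p < 0}`. -/
def O : Set (ℝ × ℝ) := {z | z.2 < 0}

/-- Lie bracket of vector fields on `ℝ²`: `[V,W] = DW·V - DV·W`. -/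
noncomputable def bracket (V W : ℝ × ℝ → ℝ × ℝ) (z : ℝ × ℝ) : ℝ × ℝ :=
  fderiv ℝ W z (V z) - fderiv ℝ V z (W z)

noncomputable def X₁ : ℝ × ℝ → ℝ × ℝ := fun z => (1 / Real.sqrt (-z.2), 0)
def X₂ : ℝ × ℝ → ℝ × ℝ := fun _ => (1, 0)
def X₃ : ℝ × ℝ → ℝ × ℝ := fun z => (z.1, -z.2)
def X₄ : ℝ × ℝ → ℝ × ℝ := fun z => (z.1 ^ 2, -2 * z.1 * z.2)
noncomputable def X₅ : ℝ × ℝ → ℝ × ℝ :=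
  fun z => (z.1 / Real.sqrt (-z.2), 2 * Real.sqrt (-z.2))

noncomputable def XF : Fin 5 → (ℝ × ℝ → ℝ × ℝ) := ![X₁, X₂, X₃, X₄, X₅]

noncomputable def rt (z : ℝ × ℝ) : ℝ := Real.sqrt (-z.2)

lemma rt_pos {z : ℝ × ℝ} (hz : z.2 < 0) : 0 < rt z :=
  Real.sqrt_pos.2 (by linarith)

lemma rt_sq {z : ℝ × ℝ} (hz : z.2 < 0) : rt z ^ 2 = -z.2 :=
  Real.sq_sqrt (by linarith)

lemma hasFDerivAt_rt {z : ℝ × ℝ} (hz : z.2 < 0) :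
    HasFDerivAt (fun w : ℝ × ℝ => Real.sqrt (-w.2))
      ((-(2 * rt z)⁻¹) • ContinuousLinearMap.snd ℝ ℝ ℝ) z := by
  have h1 : HasDerivAt Real.sqrt (1 / (2 * Real.sqrt (-z.2))) (-z.2) :=
    Real.hasDerivAt_sqrt (by linarith)
  have h2 : HasFDerivAt (fun w : ℝ × ℝ => -w.2)
      (-(ContinuousLinearMap.snd ℝ ℝ ℝ)) z := (hasFDerivAt_snd).neg
  have h3 := h1.comp_hasFDerivAt z h2
  rw [show ((1 / (2 * Real.sqrt (-z.2))) • -(ContinuousLinearMap.snd ℝ ℝ ℝ))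
      = (-(2 * rt z)⁻¹) • ContinuousLinearMap.snd ℝ ℝ ℝ by
    rw [smul_neg, ← neg_smul, rt]; congr 1; ring] at h3
  exact h3

lemma hasFDerivAt_rt_inv {z : ℝ × ℝ} (hz : z.2 < 0) :
    HasFDerivAt (fun w : ℝ × ℝ => (Real.sqrt (-w.2))⁻¹)
      (((2 * rt z ^ 3)⁻¹) • ContinuousLinearMap.snd ℝ ℝ ℝ) z := by
  have h0 : Real.sqrt (-z.2) ≠ 0 := (rt_pos hz).ne'
  have hs : (0:ℝ) < Real.sqrt (-z.2) := rt_pos hz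
  have h1 : HasDerivAt (fun t : ℝ => (Real.sqrt t)⁻¹)
      (-(1 / (2 * Real.sqrt (-z.2))) / (Real.sqrt (-z.2)) ^ 2) (-z.2) :=
    (Real.hasDerivAt_sqrt (by linarith)).inv h0
  have h2 : HasFDerivAt (fun w : ℝ × ℝ => -w.2)
      (-(ContinuousLinearMap.snd ℝ ℝ ℝ)) z := (hasFDerivAt_snd).neg
  have h3 := h1.comp_hasFDerivAt z h2
  rw [show ((-(1 / (2 * Real.sqrt (-z.2))) / (Real.sqrt (-z.2)) ^ 2) • -(ContinuousLinearMap.snd ℝ ℝ ℝ))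
      = ((2 * rt z ^ 3)⁻¹) • ContinuousLinearMap.snd ℝ ℝ ℝ by
    rw [smul_neg, ← neg_smul, rt]; congr 1; field_simp] at h3
  exact h3

lemma fd1 {z : ℝ × ℝ} (hz : z.2 < 0) (v : ℝ × ℝ) :
    fderiv ℝ X₁ z v = (v.2 / (2 * rt z ^ 3), 0) := by
  have h : HasFDerivAt X₁
      ((((2 * rt z ^ 3)⁻¹) • ContinuousLinearMap.snd ℝ ℝ ℝ).prod 0) z := by
    have e : X₁ = fun w : ℝ × ℝ => ((Real.sqrt (-w.2))⁻¹, (0:ℝ)) := by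
      funext w; simp [X₁, one_div]
    rw [e]
    exact HasFDerivAt.prodMk (hasFDerivAt_rt_inv hz) (hasFDerivAt_const 0 z)
  rw [h.fderiv]
  simp [div_eq_mul_inv, mul_comm]

lemma fd2 (z v : ℝ × ℝ) : fderiv ℝ X₂ z v = (0, 0) := by
  have h : HasFDerivAt X₂ (0 : ℝ × ℝ →L[ℝ] ℝ × ℝ) z := hasFDerivAt_const _ z
  rw [h.fderiv]; simp; rfl

lemma fd3 (z v : ℝ × ℝ) : fderiv ℝ X₃ z v = (v.1, -v.2) := by
  have h : HasFDerivAt X₃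
      ((ContinuousLinearMap.fst ℝ ℝ ℝ).prod (-(ContinuousLinearMap.snd ℝ ℝ ℝ))) z :=
    HasFDerivAt.prodMk hasFDerivAt_fst hasFDerivAt_snd.neg
  rw [h.fderiv]; simp

lemma fd4 (z v : ℝ × ℝ) :
    fderiv ℝ X₄ z v = (2 * z.1 * v.1, -2 * z.2 * v.1 - 2 * z.1 * v.2) := by
  have hf : HasFDerivAt (fun w : ℝ × ℝ => w.1) (ContinuousLinearMap.fst ℝ ℝ ℝ) z :=
    hasFDerivAt_fst
  have hsn : HasFDerivAt (fun w : ℝ × ℝ => w.2) (ContinuousLinearMap.snd ℝ ℝ ℝ) z :=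
    hasFDerivAt_snd
  have e : X₄ = fun w : ℝ × ℝ => (w.1 * w.1, -2 * w.1 * w.2) := by
    funext w; simp [X₄, pow_two]
  have h' : HasFDerivAt X₄
      ((z.1 • ContinuousLinearMap.fst ℝ ℝ ℝ + z.1 • ContinuousLinearMap.fst ℝ ℝ ℝ).prod
       (((-2 : ℝ) * z.1) • ContinuousLinearMap.snd ℝ ℝ ℝ +
        z.2 • ((-2 : ℝ) • ContinuousLinearMap.fst ℝ ℝ ℝ))) z := by
    rw [e]; exact HasFDerivAt.prodMk (hf.mul hf) ((hf.const_mul (-2)).mul hsn)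
  rw [h'.fderiv]
  simp
  constructor <;> ring

lemma fd5 {z : ℝ × ℝ} (hz : z.2 < 0) (v : ℝ × ℝ) :
    fderiv ℝ X₅ z v = (v.1 / rt z + z.1 * v.2 / (2 * rt z ^ 3), -v.2 / rt z) := by
  have h : HasFDerivAt X₅
      ((z.1 • (((2 * rt z ^ 3)⁻¹) • ContinuousLinearMap.snd ℝ ℝ ℝ) +
        (rt z)⁻¹ • ContinuousLinearMap.fst ℝ ℝ ℝ).prod
       ((2:ℝ) • ((-(2 * rt z)⁻¹) • ContinuousLinearMap.snd ℝ ℝ ℝ))) z := by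
    have e : X₅ = fun w : ℝ × ℝ =>
        (w.1 * (Real.sqrt (-w.2))⁻¹, 2 * Real.sqrt (-w.2)) := by
      funext w; simp [X₅, div_eq_mul_inv]
    rw [e]
    have hf : HasFDerivAt (fun w : ℝ × ℝ => w.1) (ContinuousLinearMap.fst ℝ ℝ ℝ) z :=
      hasFDerivAt_fst
    have h1 := hf.mul (hasFDerivAt_rt_inv hz)
    have h2 := (hasFDerivAt_rt hz).const_mul (2:ℝ)
    exact HasFDerivAt.prodMk h1 h2
  rw [h.fderiv]
  have h0 : rt z ≠ 0 := (rt_pos hz).ne'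
  simp
  constructor
  · field_simp; ring
  · field_simp


lemma rt_def (z : ℝ × ℝ) : Real.sqrt (-z.2) = rt z := rfl

lemma B12 {z : ℝ × ℝ} (hz : z.2 < 0) :
    bracket X₁ X₂ z = (0 : ℝ × ℝ) := by
  have hs := rt_pos hz
  have h0 : rt z ≠ 0 := hs.ne'
  have hz2 : z.2 = -(rt z ^ 2) := by have := rt_sq hz; linarith
  rw [bracket, fd2 z, fd1 hz]
  simp only [X₁, X₂, X₃, X₄, X₅, one_div, Prod.smul_mk, smul_eq_mul,
    Prod.mk_sub_mk, rt_def]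
  try rw [hz2]
  rw [Prod.ext_iff]
  constructor <;>
    first
      | rfl
      | (norm_num; done)
      | (field_simp; done)
      | (field_simp; ring; done)
      | (norm_num; field_simp; done)
      | (norm_num; field_simp; ring; done)
      | (field_simp; ring_nf; done)
      | (ring_nf; field_simp; ring; done)

lemma B13 {z : ℝ × ℝ} (hz : z.2 < 0) :
    bracket X₁ X₃ z = (1/2 : ℝ) • X₁ z := by
  have hs := rt_pos hz
  have h0 : rt z ≠ 0 := hs.ne'
  have hz2 : z.2 = -(rt z ^ 2) := by have := rt_sq hz; linarith
  rw [bracket, fd3 z, fd1 hz]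
  simp only [X₁, X₂, X₃, X₄, X₅, one_div, Prod.smul_mk, smul_eq_mul,
    Prod.mk_sub_mk, rt_def]
  try rw [hz2]
  rw [Prod.ext_iff]
  constructor <;>
    first
      | rfl
      | (norm_num; done)
      | (field_simp; done)
      | (field_simp; ring; done)
      | (norm_num; field_simp; done)
      | (norm_num; field_simp; ring; done)
      | (field_simp; ring_nf; done)
      | (ring_nf; field_simp; ring; done)

lemma B14 {z : ℝ × ℝ} (hz : z.2 < 0) :
    bracket X₁ X₄ z = X₅ z := by
  have hs := rt_pos hz
  have h0 : rt z ≠ 0 := hs.ne'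
  have hz2 : z.2 = -(rt z ^ 2) := by have := rt_sq hz; linarith
  rw [bracket, fd4 z, fd1 hz]
  simp only [X₁, X₂, X₃, X₄, X₅, one_div, Prod.smul_mk, smul_eq_mul,
    Prod.mk_sub_mk, rt_def]
  try rw [hz2]
  rw [Prod.ext_iff]
  constructor <;>
    first
      | rfl
      | (norm_num; done)
      | (field_simp; done)
      | (field_simp; ring; done)
      | (norm_num; field_simp; done)
      | (norm_num; field_simp; ring; done)
      | (field_simp; ring_nf; done)
      | (ring_nf; field_simp; ring; done)

lemma B15 {z : ℝ × ℝ} (hz : z.2 < 0) :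
    bracket X₁ X₅ z = (0 : ℝ × ℝ) := by
  have hs := rt_pos hz
  have h0 : rt z ≠ 0 := hs.ne'
  have hz2 : z.2 = -(rt z ^ 2) := by have := rt_sq hz; linarith
  rw [bracket, fd5 hz, fd1 hz]
  simp only [X₁, X₂, X₃, X₄, X₅, one_div, Prod.smul_mk, smul_eq_mul,
    Prod.mk_sub_mk, rt_def]
  try rw [hz2]
  rw [Prod.ext_iff]
  constructor <;>
    first
      | rfl
      | (norm_num; done)
      | (field_simp; done)
      | (field_simp; ring; done)
      | (norm_num; field_simp; done)
      | (norm_num; field_simp; ring; done)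
      | (field_simp; ring_nf; done)
      | (ring_nf; field_simp; ring; done)

lemma B23 {z : ℝ × ℝ} (hz : z.2 < 0) :
    bracket X₂ X₃ z = X₂ z := by
  have hs := rt_pos hz
  have h0 : rt z ≠ 0 := hs.ne'
  have hz2 : z.2 = -(rt z ^ 2) := by have := rt_sq hz; linarith
  rw [bracket, fd3 z, fd2 z]
  simp only [X₁, X₂, X₃, X₄, X₅, one_div, Prod.smul_mk, smul_eq_mul,
    Prod.mk_sub_mk, rt_def]
  try rw [hz2]
  rw [Prod.ext_iff]
  constructor <;>
    first
      | rfl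
      | (norm_num; done)
      | (field_simp; done)
      | (field_simp; ring; done)
      | (norm_num; field_simp; done)
      | (norm_num; field_simp; ring; done)
      | (field_simp; ring_nf; done)
      | (ring_nf; field_simp; ring; done)

lemma B24 {z : ℝ × ℝ} (hz : z.2 < 0) :
    bracket X₂ X₄ z = (2 : ℝ) • X₃ z := by
  have hs := rt_pos hz
  have h0 : rt z ≠ 0 := hs.ne'
  have hz2 : z.2 = -(rt z ^ 2) := by have := rt_sq hz; linarith
  rw [bracket, fd4 z, fd2 z]
  simp only [X₁, X₂, X₃, X₄, X₅, one_div, Prod.smul_mk, smul_eq_mul,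
    Prod.mk_sub_mk, rt_def]
  try rw [hz2]
  rw [Prod.ext_iff]
  constructor <;>
    first
      | rfl
      | (norm_num; done)
      | (field_simp; done)
      | (field_simp; ring; done)
      | (norm_num; field_simp; done)
      | (norm_num; field_simp; ring; done)
      | (field_simp; ring_nf; done)
      | (ring_nf; field_simp; ring; done)

lemma B25 {z : ℝ × ℝ} (hz : z.2 < 0) :
    bracket X₂ X₅ z = X₁ z := by
  have hs := rt_pos hz
  have h0 : rt z ≠ 0 := hs.ne'
  have hz2 : z.2 = -(rt z ^ 2) := by have := rt_sq hz; linarith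
  rw [bracket, fd5 hz, fd2 z]
  simp only [X₁, X₂, X₃, X₄, X₅, one_div, Prod.smul_mk, smul_eq_mul,
    Prod.mk_sub_mk, rt_def]
  try rw [hz2]
  rw [Prod.ext_iff]
  constructor <;>
    first
      | rfl
      | (norm_num; done)
      | (field_simp; done)
      | (field_simp; ring; done)
      | (norm_num; field_simp; done)
      | (norm_num; field_simp; ring; done)
      | (field_simp; ring_nf; done)
      | (ring_nf; field_simp; ring; done)

lemma B34 {z : ℝ × ℝ} (hz : z.2 < 0) :
    bracket X₃ X₄ z = X₄ z := by
  have hs := rt_pos hz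
  have h0 : rt z ≠ 0 := hs.ne'
  have hz2 : z.2 = -(rt z ^ 2) := by have := rt_sq hz; linarith
  rw [bracket, fd4 z, fd3 z]
  simp only [X₁, X₂, X₃, X₄, X₅, one_div, Prod.smul_mk, smul_eq_mul,
    Prod.mk_sub_mk, rt_def]
  try rw [hz2]
  rw [Prod.ext_iff]
  constructor <;>
    first
      | rfl
      | (norm_num; done)
      | (field_simp; done)
      | (field_simp; ring; done)
      | (norm_num; field_simp; done)
      | (norm_num; field_simp; ring; done)
      | (field_simp; ring_nf; done)
      | (ring_nf; field_simp; ring; done)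

lemma B35 {z : ℝ × ℝ} (hz : z.2 < 0) :
    bracket X₃ X₅ z = (1/2 : ℝ) • X₅ z := by
  have hs := rt_pos hz
  have h0 : rt z ≠ 0 := hs.ne'
  have hz2 : z.2 = -(rt z ^ 2) := by have := rt_sq hz; linarith
  rw [bracket, fd5 hz, fd3 z]
  simp only [X₁, X₂, X₃, X₄, X₅, one_div, Prod.smul_mk, smul_eq_mul,
    Prod.mk_sub_mk, rt_def]
  try rw [hz2]
  rw [Prod.ext_iff]
  constructor <;>
    first
      | rfl
      | (norm_num; done)
      | (field_simp; done)
      | (field_simp; ring; done)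
      | (norm_num; field_simp; done)
      | (norm_num; field_simp; ring; done)
      | (field_simp; ring_nf; done)
      | (ring_nf; field_simp; ring; done)

lemma B45 {z : ℝ × ℝ} (hz : z.2 < 0) :
    bracket X₄ X₅ z = (0 : ℝ × ℝ) := by
  have hs := rt_pos hz
  have h0 : rt z ≠ 0 := hs.ne'
  have hz2 : z.2 = -(rt z ^ 2) := by have := rt_sq hz; linarith
  rw [bracket, fd5 hz, fd4 z]
  simp only [X₁, X₂, X₃, X₄, X₅, one_div, Prod.smul_mk, smul_eq_mul,
    Prod.mk_sub_mk, rt_def]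
  try rw [hz2]
  rw [Prod.ext_iff]
  constructor <;>
    first
      | rfl
      | (norm_num; done)
      | (field_simp; done)
      | (field_simp; ring; done)
      | (norm_num; field_simp; done)
      | (norm_num; field_simp; ring; done)
      | (field_simp; ring_nf; done)
      | (ring_nf; field_simp; ring; done)


lemma brk_anti (V W : ℝ × ℝ → ℝ × ℝ) (z : ℝ × ℝ) :
    bracket W V z = -bracket V W z := (neg_sub _ _).symm

lemma sum5 (d : Fin 5 → ℝ) (z : ℝ × ℝ) :
    (∑ k, d k • XF k z) =
      d 0 • X₁ z + d 1 • X₂ z + d 2 • X₃ z + d 3 • X₄ z + d 4 • X₅ z := by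
  simp [XF, Fin.sum_univ_five]

lemma pack (V W : ℝ × ℝ → ℝ × ℝ) (a b c d e : ℝ)
    (h : ∀ z : ℝ × ℝ, z.2 < 0 →
      bracket V W z = a • X₁ z + b • X₂ z + c • X₃ z + d • X₄ z + e • X₅ z) :
    ∃ dd : Fin 5 → ℝ, ∀ z ∈ O, bracket V W z = ∑ k, dd k • XF k z := by
  refine ⟨![a, b, c, d, e], fun z hz => ?_⟩
  rw [h z hz, sum5]
  norm_num
  rfl

/-- `X₁,…,X₅` are linearly independent over `ℝ` and their real span
is closed under the Lie bracket, so they span a 5-dimensional Lie algebra. -/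
theorem span_is_five_dim_lie_algebra :
    (∀ c : Fin 5 → ℝ, (∀ z ∈ O, (∑ i, c i • XF i z) = 0) → c = 0) ∧
    (∀ i j : Fin 5, ∃ d : Fin 5 → ℝ, ∀ z ∈ O,
      bracket (XF i) (XF j) z = ∑ k, d k • XF k z) := by
  constructor
  · intro c h
    have h4 : Real.sqrt 4 = 2 := by
      rw [show (4:ℝ) = 2^2 by norm_num, Real.sqrt_sq (by norm_num)]
    have h1 := h (0, -1) (by norm_num [O])
    have h2 := h (0, -4) (by norm_num [O])
    have h3 := h (1, -1) (by norm_num [O])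
    simp [XF, Fin.sum_univ_five, X₁, X₂, X₃, X₄, X₅, Prod.ext_iff, h4, Matrix.vecHead, Matrix.vecTail] at h1 h2 h3
    obtain ⟨a1, b1⟩ := h1
    obtain ⟨a2, b2⟩ := h2
    obtain ⟨a3, b3⟩ := h3
    have e0 : c 0 = 0 := by linarith
    have e1 : c 1 = 0 := by linarith
    have e2 : c 2 = 0 := by linarith
    have e4 : c 4 = 0 := by linarith
    have e3 : c 3 = 0 := by linarith
    funext i
    fin_cases i <;> simp [e0, e1, e2, e3, e4]
  · have self0 : ∀ (V : ℝ × ℝ → ℝ × ℝ),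
        ∃ dd : Fin 5 → ℝ, ∀ z ∈ O, bracket V V z = ∑ k, dd k • XF k z := by
      intro V
      exact ⟨0, fun z hz => by simp [bracket, sub_self]⟩
    intro i j
    fin_cases i <;> fin_cases j <;>
      simp only [XF, Matrix.cons_val_zero, Matrix.cons_val_one, Matrix.head_cons,
        Matrix.cons_val_two, Matrix.tail_cons, Matrix.cons_val_three,
        Matrix.cons_val_four, Fin.mk_zero, Fin.mk_one]
    · exact self0 X₁
    · exact pack X₁ X₂ 0 0 0 0 0 (fun z hz => by rw [B12 hz]; module)
    · exact pack X₁ X₃ (1/2) 0 0 0 0 (fun z hz => by rw [B13 hz]; module)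
    · exact pack X₁ X₄ 0 0 0 0 1 (fun z hz => by rw [B14 hz]; module)
    · exact pack X₁ X₅ 0 0 0 0 0 (fun z hz => by rw [B15 hz]; module)
    · exact pack X₂ X₁ 0 0 0 0 0 (fun z hz => by rw [brk_anti, B12 hz]; module)
    · exact self0 X₂
    · exact pack X₂ X₃ 0 1 0 0 0 (fun z hz => by rw [B23 hz]; module)
    · exact pack X₂ X₄ 0 0 2 0 0 (fun z hz => by rw [B24 hz]; module)
    · exact pack X₂ X₅ 1 0 0 0 0 (fun z hz => by rw [B25 hz]; module)
    · exact pack X₃ X₁ (-(1/2)) 0 0 0 0 (fun z hz => by rw [brk_anti, B13 hz]; module)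
    · exact pack X₃ X₂ 0 (-1) 0 0 0 (fun z hz => by rw [brk_anti, B23 hz]; module)
    · exact self0 X₃
    · exact pack X₃ X₄ 0 0 0 1 0 (fun z hz => by rw [B34 hz]; module)
    · exact pack X₃ X₅ 0 0 0 0 (1/2) (fun z hz => by rw [B35 hz]; module)
    · exact pack X₄ X₁ 0 0 0 0 (-1) (fun z hz => by rw [brk_anti, B14 hz]; module)
    · exact pack X₄ X₂ 0 0 (-2) 0 0 (fun z hz => by rw [brk_anti, B24 hz]; module)
    · exact pack X₄ X₃ 0 0 0 (-1) 0 (fun z hz => by rw [brk_anti, B34 hz]; module)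
    · exact self0 X₄
    · exact pack X₄ X₅ 0 0 0 0 0 (fun z hz => by rw [B45 hz]; module)
    · exact pack X₅ X₁ 0 0 0 0 0 (fun z hz => by rw [brk_anti, B15 hz]; module)
    · exact pack X₅ X₂ (-1) 0 0 0 0 (fun z hz => by rw [brk_anti, B25 hz]; module)
    · exact pack X₅ X₃ 0 0 0 0 (-(1/2)) (fun z hz => by rw [brk_anti, B35 hz]; module)
    · exact pack X₅ X₄ 0 0 0 0 0 (fun z hz => by rw [brk_anti, B45 hz]; module)
    · exact self0 X₅
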